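/- Let B be an exceptional ring over R of rank n > 2, i.e., B = R ⊕ M where M is a left ideal of B, M is projective of rank n−1, and left multiplication by elements of M on M is given by scalar multiplication through an R-linear map t: M → R (so xy = t(x)y for x, y ∈ M). Then the splitting B = R ⊕ M with these properties is unique: if B = R ⊕ M′ is another such splitting, then M′ = M. -/

import Mathlib

/-- `M` has constant rank `n` over `R`. -/
def ModConstRank (R M : Type*) [CommRing R] [AddCommGroup M] [Module R M] (n : ℕ) : Prop :=
  ∀ (p : Ideal R) (hp : p.IsPrime),
    haveI := hp
    Nonempty (Module.Basis (Fin n) (Localization.AtPrime p) (LocalizedModule p.primeCompl M))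

/-- `M` is an exceptional splitting of the `R`-algebra `B`: `B = R ⊕ M` as `R`-modules, `M`
is a left ideal of `B`, and left multiplication of `M` on `M` factors through an `R`-linear
map `t : M → R`, i.e. `x y = t(x) y` for `x, y ∈ M`. -/
def IsExceptionalSplitting (R : Type*) {B : Type*} [CommRing R] [Ring B] [Algebra R B]
    (M : Submodule R B) : Prop :=
  IsCompl (LinearMap.range (Algebra.linearMap R B)) M ∧
  (∀ (b : B), ∀ m ∈ M, b * m ∈ M) ∧
  ∃ t : M →ₗ[R] R, ∀ x y : M, (x : B) * (y : B) = t x • (y : B)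

section aux

variable {R M : Type*} [CommRing R] [AddCommGroup M] [Module R M]

/-- Key lemma: a bilinear identity `f y • x = g x • y` on a module of constant
rank `≥ 2` forces `f = 0`. -/
lemma aux_zero_of_biident {k : ℕ} (hk : 2 ≤ k) (hrk : ModConstRank R M k)
    (f g : M →ₗ[R] R) (hfg : ∀ x y : M, f y • x = g x • y) (x : M) : f x = 0 := by
  apply eq_zero_of_localization
  intro p hp
  haveI hp' : p.IsPrime := hp.isPrime
  set S := p.primeCompl
  obtain ⟨b⟩ := hrk p hp'
  set Rp := Localization.AtPrime p
  let F : LocalizedModule S M →ₗ[R] Rp :=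
    IsLocalizedModule.map S (LocalizedModule.mkLinearMap S M) (Algebra.linearMap R Rp) f
  let G : LocalizedModule S M →ₗ[R] Rp :=
    IsLocalizedModule.map S (LocalizedModule.mkLinearMap S M) (Algebra.linearMap R Rp) g
  have hmk' : ∀ (r : R) (s : S),
      IsLocalizedModule.mk' (Algebra.linearMap R Rp) r s = IsLocalization.mk' Rp r s := by
    intro r s
    rw [IsLocalizedModule.mk'_eq_iff, Submonoid.smul_def, Algebra.smul_def,
      Algebra.linearMap_apply, IsLocalization.mk'_spec']
  have hFmk : ∀ (m : M) (s : S), F (LocalizedModule.mk m s) = IsLocalization.mk' Rp (f m) s := by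
    intro m s
    rw [IsLocalizedModule.mk_eq_mk', IsLocalizedModule.map_mk', hmk']
  have hGmk : ∀ (m : M) (s : S), G (LocalizedModule.mk m s) = IsLocalization.mk' Rp (g m) s := by
    intro m s
    rw [IsLocalizedModule.mk_eq_mk', IsLocalizedModule.map_mk', hmk']
  have key : ∀ u v : LocalizedModule S M, F v • u = G u • v := by
    intro u v
    induction u using LocalizedModule.induction_on with
    | h m s =>
      induction v using LocalizedModule.induction_on with
      | h m' s' =>
        have e1 : IsLocalization.mk' Rp (f m') s' = Localization.mk (f m') s' :=
          (Localization.mk_eq_mk'_apply _ _).symm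
        have e2 : IsLocalization.mk' Rp (g m) s = Localization.mk (g m) s :=
          (Localization.mk_eq_mk'_apply _ _).symm
        rw [hFmk, hGmk, e1, e2, LocalizedModule.mk_smul_mk, LocalizedModule.mk_smul_mk,
          hfg, mul_comm]
  -- evaluate coordinates
  have E : ∀ (u v : LocalizedModule S M) (i : Fin k),
      F v * b.repr u i = G u * b.repr v i := by
    intro u v i
    have := congrArg (fun w => b.repr w i) (key u v)
    simpa [Finsupp.smul_apply, smul_eq_mul] using this
  have h01 : (⟨0, by omega⟩ : Fin k) ≠ ⟨1, by omega⟩ := by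
    simp [Fin.ext_iff]
  set i : Fin k := ⟨0, by omega⟩
  set j : Fin k := ⟨1, by omega⟩
  have hFbj : F (b j) = 0 := by
    have := E (b i) (b j) i
    simpa [Module.Basis.repr_self, Finsupp.single_eq_same, Finsupp.single_eq_of_ne' h01.symm] using this
  have hGbj : G (b j) = 0 := by
    have := E (b j) (b j) j
    simpa [Module.Basis.repr_self, Finsupp.single_eq_same, hFbj] using this.symm
  have hfin : F (LocalizedModule.mk x 1) = 0 := by
    have := E (b j) (LocalizedModule.mk x 1) j
    simpa [Module.Basis.repr_self, Finsupp.single_eq_same, hGbj] using this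
  have : F (LocalizedModule.mk x 1) = algebraMap R Rp (f x) := by
    rw [hFmk, IsLocalization.mk'_one]
  rwa [this] at hfin

/-- A module of positive constant rank is faithful. -/
lemma aux_faithful {k : ℕ} (hk : 0 < k) (hrk : ModConstRank R M k) (r : R)
    (h : ∀ x : M, r • x = 0) : r = 0 := by
  apply eq_zero_of_localization
  intro p hp
  haveI hp' : p.IsPrime := hp.isPrime
  set S := p.primeCompl
  obtain ⟨b⟩ := hrk p hp'
  set Rp := Localization.AtPrime p
  have hz : ∀ u : LocalizedModule S M, algebraMap R Rp r • u = 0 := by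
    intro u
    induction u using LocalizedModule.induction_on with
    | h m s =>
      rw [algebraMap_smul, LocalizedModule.smul'_mk, h, LocalizedModule.zero_mk]
  set i : Fin k := ⟨0, hk⟩
  have h2 := congrArg (fun w => b.repr w i) (hz (b i))
  simp only [map_smul, Finsupp.smul_apply, Module.Basis.repr_self, Finsupp.single_eq_same,
    smul_eq_mul, mul_one, map_zero, Finsupp.coe_zero, Pi.zero_apply] at h2
  exact h2

end aux

section main

variable {R B : Type*} [CommRing R] [Ring B] [Algebra R B]

lemma aux_le (hinj : Function.Injective (algebraMap R B))
    {k : ℕ} (hk : 2 ≤ k) (M M' : Submodule R B)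
    (hM'rk : ModConstRank R M' k)
    (hM : IsExceptionalSplitting R M) (hM' : IsExceptionalSplitting R M') :
    M' ≤ M := by
  obtain ⟨hc, -, t, ht⟩ := hM
  obtain ⟨hc', -, t', ht'⟩ := hM'
  set R1 := LinearMap.range (Algebra.linearMap R B) with hR1
  have hinjι : Function.Injective (Algebra.linearMap R B) := hinj
  set e : R ≃ₗ[R] R1 := LinearEquiv.ofInjective (Algebra.linearMap R B) hinjι with he
  set prR : B →ₗ[R] R1 := Submodule.linearProjOfIsCompl R1 M hc with hprR
  set prM : B →ₗ[R] M := Submodule.linearProjOfIsCompl M R1 hc.symm with hprM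
  set a : M' →ₗ[R] R := e.symm.toLinearMap ∘ₗ prR ∘ₗ M'.subtype with ha
  set μ : M' →ₗ[R] M := prM ∘ₗ M'.subtype with hμ
  have hcoe_e : ∀ r : R, ((e r : R1) : B) = algebraMap R B r := by
    intro r
    rw [he]
    exact LinearEquiv.ofInjective_apply _ _
  have hdec : ∀ x : M', (x : B) = algebraMap R B (a x) + ((μ x : M) : B) := by
    intro x
    have h1 : ((prR (x : B) : R1) : B) + ((prM (x : B) : M) : B) = (x : B) :=
      Submodule.projection_add_projection_eq_self hc (x : B)
    have h2 : ((prR (x : B) : R1) : B) = algebraMap R B (a x) := by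
      rw [ha]
      simp only [LinearMap.coe_comp, Function.comp_apply, LinearEquiv.coe_coe,
        Submodule.coe_subtype]
      rw [← hcoe_e (e.symm (prR (x : B)))]
      rw [e.apply_symm_apply]
    rw [← h1, h2]
    rfl
  -- the key identity
  have hI : ∀ x y : M', a y • x = (t' x - a x - t (μ x)) • y := by
    intro x y
    -- first prove it after applying μ
    have hμinj : Function.Injective μ := by
      intro z w hzw
      rw [← sub_eq_zero, ← map_sub] at hzw
      have hmem : ((z - w : M') : B) ∈ R1 := by
        have h1 : ((prR ((z - w : M') : B) : R1) : B) + ((prM ((z - w : M') : B) : M) : B)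
            = ((z - w : M') : B) :=
          Submodule.projection_add_projection_eq_self hc _
        have h2 : prM ((z - w : M') : B) = 0 := hzw
        rw [h2] at h1
        simp only [Submodule.coe_zero, add_zero] at h1
        rw [← h1]
        exact (prR _).2
      have : ((z - w : M') : B) = 0 := by
        have hd := hc'.disjoint
        exact (Submodule.disjoint_def.mp hd) _ hmem (z - w).2
      have : (z - w : M') = 0 := Subtype.ext this
      exact sub_eq_zero.mp this
    apply hμinj
    rw [map_smul, map_smul]
    -- now prove a y • μ x = (t' x - a x - t (μ x)) • μ y  in M
    have hmul : (x : B) * (y : B) = t' x • (y : B) := ht' x y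
    have hx := hdec x
    have hy := hdec y
    -- expand
    have expand : (x : B) * (y : B)
        = algebraMap R B (a x * a y) + a x • ((μ y : M) : B) + a y • ((μ x : M) : B)
          + t (μ x) • ((μ y : M) : B) := by
      rw [hx, hy]
      rw [add_mul, mul_add, mul_add, ← map_mul]
      rw [← Algebra.smul_def]
      rw [← Algebra.commutes (a y) ((μ x : M) : B), ← Algebra.smul_def]
      rw [ht (μ x) (μ y)]
      abel
    -- apply prM to both sides
    have happ := congrArg prM (expand.symm.trans hmul)
    simp only [map_add, map_smul] at happ
    have hprM_alg : ∀ r : R, prM (algebraMap R B r) = 0 := by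
      intro r
      apply Submodule.linearProjOfIsCompl_apply_right' hc.symm
      exact ⟨r, rfl⟩
    have hprM_M : ∀ m : M, prM ((m : B)) = m :=
      fun m => Submodule.linearProjOfIsCompl_apply_left hc.symm m
    rw [hprM_alg, hprM_M, hprM_M] at happ
    -- happ : 0 + a x • μ y + a y • μ x + t (μ x) • μ y = t' x • prM y
    have hy' : prM (y : B) = μ y := rfl
    rw [hy'] at happ
    rw [zero_add] at happ
    rw [sub_smul (t' x - a x) (t (μ x)) (μ y), sub_smul (t' x) (a x) (μ y), eq_sub_iff_add_eq, eq_sub_iff_add_eq, ← happ]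
    abel
  -- conclude a = 0
  set g : M' →ₗ[R] R := t' - a - (t ∘ₗ μ) with hg
  have hfg : ∀ x y : M', a y • x = g x • y := by
    intro x y
    rw [hg]
    simpa using hI x y
  have ha0 : ∀ x : M', a x = 0 := aux_zero_of_biident hk hM'rk a g hfg
  -- hence M' ≤ M
  intro b hb
  have hd := hdec ⟨b, hb⟩
  rw [ha0, map_zero, zero_add] at hd
  have h2 : b = ((μ ⟨b, hb⟩ : M) : B) := by simpa using hd
  rw [h2]
  exact (μ ⟨b, hb⟩).2

end main

/-- If `B` is an exceptional ring of constant rank `n > 2` over `R`, the splitting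
`B = R ⊕ M` is unique: any two exceptional splittings (with `M` projective, of rank `n−1`)
coincide. -/
theorem stmt18 (R B : Type) [CommRing R] [IsNoetherianRing R] [Ring B] [Algebra R B]
    [Module.Finite R B] [Module.Projective R B]
    (hconn : ∀ e : R, IsIdempotentElem e → e = 0 ∨ e = 1)
    (n : ℕ) (hn : 2 < n) (hrank : ModConstRank R B n)
    (M M' : Submodule R B)
    (hMproj : Module.Projective R M) (hM'proj : Module.Projective R M')
    (hMrk : ModConstRank R M (n - 1)) (hM'rk : ModConstRank R M' (n - 1))
    (hM : IsExceptionalSplitting R M) (hM' : IsExceptionalSplitting R M') :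
    M = M' := by
  have hinj : Function.Injective (algebraMap R B) := by
    rw [injective_iff_map_eq_zero]
    intro r hr
    apply aux_faithful (M := B) (k := n) (by omega) hrank
    intro x
    rw [Algebra.smul_def, hr, zero_mul]
  have hk : 2 ≤ n - 1 := by omega
  exact le_antisymm
    (aux_le hinj hk M' M hMrk hM' hM)
    (aux_le hinj hk M M' hM'rk hM hM')
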